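/- In the max-relaxation iteration for an irreducible finite matrix set 𝒜, the inequalities ρ⁻_n ≤ ρ⁻_{n+1} ≤ ρ⁺_{n+1} ≤ ρ⁺_n hold for every n ≥ 0; in particular ρ⁻_n ≤ ρ⁺_k for all n, k ≥ 0, and the limits ρ⁻ = lim ρ⁻_n and ρ⁺ = lim ρ⁺_n exist. -/

import Mathlib

open Matrix Filter Topology Bornology Pointwise

/-- `N` is a norm on `ℝ^m`: nonnegative, definite, absolutely homogeneous, subadditive. -/
def IsNorm {m : ℕ} (N : (Fin m → ℝ) → ℝ) : Prop :=
  (∀ x, 0 ≤ N x) ∧ (∀ x, N x = 0 → x = 0) ∧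
    (∀ (t : ℝ) (x), N (t • x) = |t| * N x) ∧ (∀ x y, N (x + y) ≤ N x + N y)

/-- `N` is a seminorm on `ℝ^m`. -/
def IsSeminorm {m : ℕ} (N : (Fin m → ℝ) → ℝ) : Prop :=
  (∀ x, 0 ≤ N x) ∧
    (∀ (t : ℝ) (x), N (t • x) = |t| * N x) ∧ (∀ x y, N (x + y) ≤ N x + N y)

/-- The family `A` is irreducible: the matrices have no common invariant subspace
other than `⊥` and `⊤`. -/
def IsIrreducibleFamily {m r : ℕ} (A : Fin r → Matrix (Fin m) (Fin m) ℝ) : Prop :=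
  ∀ W : Submodule ℝ (Fin m → ℝ), (∀ i, ∀ x ∈ W, (A i).mulVec x ∈ W) → W = ⊥ ∨ W = ⊤

/-- The operator norm of a matrix acting on `ℝ^m` (with its sup norm). -/
noncomputable def matNorm {m : ℕ} (M : Matrix (Fin m) (Fin m) ℝ) : ℝ :=
  ‖LinearMap.toContinuousLinearMap M.mulVecLin‖

/-- The joint spectral radius of the family `A`:
`limsup_n (max over words of length n of the norm of the product)^(1/n)`. -/
noncomputable def jsr {m r : ℕ} (A : Fin r → Matrix (Fin m) (Fin m) ℝ) : ℝ :=
  Filter.atTop.limsup fun n : ℕ =>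
    (⨆ w : Fin n → Fin r, matNorm (List.ofFn fun k => A (w k)).prod) ^ (1 / (n : ℝ))

/-- `maxA A N x = max_i N (A_i x)`. -/
noncomputable def maxA {m r : ℕ} (A : Fin r → Matrix (Fin m) (Fin m) ℝ)
    (N : (Fin m → ℝ) → ℝ) (x : Fin m → ℝ) : ℝ :=
  ⨆ i, N ((A i).mulVec x)

/-- `ρ⁺ = max_{x ≠ 0} (max_i N (A_i x)) / N x`. -/
noncomputable def rhoSup {m r : ℕ} (A : Fin r → Matrix (Fin m) (Fin m) ℝ)
    (N : (Fin m → ℝ) → ℝ) : ℝ :=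
  sSup ((fun x => maxA A N x / N x) '' {x | x ≠ 0})

/-- `ρ⁻ = min_{x ≠ 0} (max_i N (A_i x)) / N x`. -/
noncomputable def rhoInf {m r : ℕ} (A : Fin r → Matrix (Fin m) (Fin m) ℝ)
    (N : (Fin m → ℝ) → ℝ) : ℝ :=
  sInf ((fun x => maxA A N x / N x) '' {x | x ≠ 0})

/-- An averaging function: continuous on positives, `γ t t = t`, and strictly
between `min` and `max` off the diagonal. -/
def IsAveraging (γ : ℝ → ℝ → ℝ) : Prop :=
  ContinuousOn (fun p : ℝ × ℝ => γ p.1 p.2) {p | 0 < p.1 ∧ 0 < p.2} ∧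
    (∀ t, 0 < t → γ t t = t) ∧
    ∀ t s, 0 < t → 0 < s → t ≠ s → min t s < γ t s ∧ γ t s < max t s

/-- The max-relaxation iteration: `‖x‖_{n+1} = max (‖x‖_n, γ_n⁻¹ max_i ‖A_i x‖_n)`
where `γ_n = γ (ρ⁻_n, ρ⁺_n)`. -/
noncomputable def iterN {m r : ℕ} (A : Fin r → Matrix (Fin m) (Fin m) ℝ)
    (γ : ℝ → ℝ → ℝ) (N0 : (Fin m → ℝ) → ℝ) : ℕ → (Fin m → ℝ) → ℝ
  | 0 => N0
  | n + 1 => fun x =>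
      max (iterN A γ N0 n x)
        ((γ (rhoInf A (iterN A γ N0 n)) (rhoSup A (iterN A γ N0 n)))⁻¹ *
          maxA A (iterN A γ N0 n) x)

/-- The normalized norms `‖x‖°_n = ‖x‖_n / ‖e‖_n` of the max-relaxation iteration
(for `n = 0` this equals `‖x‖_0` since `‖e‖_0 = 1`). -/
noncomputable def iterNnorm {m r : ℕ} (A : Fin r → Matrix (Fin m) (Fin m) ℝ)
    (γ : ℝ → ℝ → ℝ) (N0 : (Fin m → ℝ) → ℝ) (e : Fin m → ℝ) (n : ℕ) :
    (Fin m → ℝ) → ℝ :=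
  fun x => iterN A γ N0 n x / iterN A γ N0 n e

/-- `e⁺(N, N') = max_{x ≠ 0} N x / N' x`. -/
noncomputable def ePlus {m : ℕ} (N N' : (Fin m → ℝ) → ℝ) : ℝ :=
  sSup ((fun x => N x / N' x) '' {x | x ≠ 0})

/-- `e⁻(N, N') = min_{x ≠ 0} N x / N' x`. -/
noncomputable def eMinus {m : ℕ} (N N' : (Fin m → ℝ) → ℝ) : ℝ :=
  sInf ((fun x => N x / N' x) '' {x | x ≠ 0})

/-- The eccentricity of the norm `N` with respect to the norm `N'`. -/
noncomputable def ecc {m : ℕ} (N N' : (Fin m → ℝ) → ℝ) : ℝ :=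
  ePlus N N' / eMinus N N'

section Helpers

variable {m r : ℕ}

lemma IsNorm.sem {N : (Fin m → ℝ) → ℝ} (h : IsNorm N) : IsSeminorm N :=
  ⟨h.1, h.2.2.1, h.2.2.2⟩

lemma IsSeminorm.zero' {N : (Fin m → ℝ) → ℝ} (h : IsSeminorm N) : N 0 = 0 := by
  have := h.2.1 0 0
  simpa using this

lemma IsNorm.pos {N : (Fin m → ℝ) → ℝ} (h : IsNorm N) {x : Fin m → ℝ} (hx : x ≠ 0) :
    0 < N x :=
  (h.1 x).lt_of_ne fun h0 => hx (h.2.1 x h0.symm)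

lemma IsSeminorm.sum_le {N : (Fin m → ℝ) → ℝ} (h : IsSeminorm N) {ι : Type*}
    (s : Finset ι) (f : ι → Fin m → ℝ) : N (∑ i ∈ s, f i) ≤ ∑ i ∈ s, N (f i) := by
  classical
  induction s using Finset.induction with
  | empty => simp [h.zero']
  | insert a s hi ih =>
    rw [Finset.sum_insert hi, Finset.sum_insert hi]
    exact le_trans (h.2.2 _ _) (by linarith)

lemma IsSeminorm.exists_bound {N : (Fin m → ℝ) → ℝ} (h : IsSeminorm N) :
    ∃ C : ℝ, 0 ≤ C ∧ ∀ x, N x ≤ C * ‖x‖ := by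
  refine ⟨∑ i, N (Pi.single i 1), Finset.sum_nonneg fun i _ => h.1 _, fun x => ?_⟩
  have hx : x = ∑ i, x i • (Pi.single i 1 : Fin m → ℝ) := by
    ext j
    simp [Finset.sum_apply, Pi.single_apply]
  calc N x = N (∑ i, x i • (Pi.single i 1 : Fin m → ℝ)) := by rw [← hx]
    _ ≤ ∑ i, N (x i • (Pi.single i 1 : Fin m → ℝ)) := h.sum_le _ _
    _ = ∑ i, |x i| * N (Pi.single i (1 : ℝ)) := by simp [h.2.1]
    _ ≤ ∑ i, ‖x‖ * N (Pi.single i (1 : ℝ)) := by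
        refine Finset.sum_le_sum fun i _ => ?_
        exact mul_le_mul_of_nonneg_right (by simpa using norm_le_pi_norm x i) (h.1 _)
    _ = (∑ i, N (Pi.single i 1)) * ‖x‖ := by rw [Finset.sum_mul]; simp [mul_comm]

lemma IsSeminorm.cont {N : (Fin m → ℝ) → ℝ} (h : IsSeminorm N) : Continuous N := by
  obtain ⟨C, hC0, hC⟩ := h.exists_bound
  have hneg : ∀ x, N (-x) = N x := fun x => by
    have := h.2.1 (-1) x
    simpa using this
  have key : ∀ x y, |N x - N y| ≤ C * ‖x - y‖ := by
    intro x y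
    rw [abs_sub_le_iff]
    constructor
    · have : N x ≤ N (x - y) + N y := by
        have := h.2.2 (x - y) y
        simpa using this
      linarith [hC (x - y)]
    · have : N y ≤ N (y - x) + N x := by
        have := h.2.2 (y - x) x
        simpa using this
      have h2 : N (y - x) = N (x - y) := by
        rw [← hneg (x - y)]; congr 1; abel
      linarith [hC (x - y)]
  have : LipschitzWith C.toNNReal N := by
    refine LipschitzWith.of_dist_le_mul fun x y => ?_
    rw [Real.dist_eq, dist_eq_norm, Real.coe_toNNReal C hC0]
    exact key x y
  exact this.continuous

lemma maxA_bdd (A : Fin r → Matrix (Fin m) (Fin m) ℝ) (N : (Fin m → ℝ) → ℝ) (x : Fin m → ℝ) :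
    BddAbove (Set.range fun i : Fin r => N ((A i).mulVec x)) :=
  Set.Finite.bddAbove (Set.finite_range _)

lemma maxA_seminorm (hr : 1 ≤ r) (A : Fin r → Matrix (Fin m) (Fin m) ℝ)
    {N : (Fin m → ℝ) → ℝ} (h : IsSeminorm N) : IsSeminorm (maxA A N) := by
  haveI : Nonempty (Fin r) := ⟨⟨0, hr⟩⟩
  refine ⟨fun x => Real.iSup_nonneg fun i => h.1 _, fun t x => ?_, fun x y => ?_⟩
  · simp only [maxA, Matrix.mulVec_smul, h.2.1]
    exact (Real.mul_iSup_of_nonneg (abs_nonneg t) _).symm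
  · simp only [maxA, Matrix.mulVec_add]
    exact ciSup_le fun i => le_trans (h.2.2 _ _)
      (add_le_add (le_ciSup (maxA_bdd A N x) i) (le_ciSup (maxA_bdd A N y) i))

lemma exists_vec_ne_zero (hm : 2 ≤ m) : ∃ x : Fin m → ℝ, x ≠ 0 := by
  refine ⟨Pi.single ⟨0, by omega⟩ 1, fun h0 => ?_⟩
  have := congrFun h0 ⟨0, by omega⟩
  simp [Pi.single_apply] at this

lemma exists_mulVec_ne_zero (hm : 2 ≤ m) (A : Fin r → Matrix (Fin m) (Fin m) ℝ)
    (hA : IsIrreducibleFamily A) {x : Fin m → ℝ} (hx : x ≠ 0) :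
    ∃ i, (A i).mulVec x ≠ 0 := by
  by_contra h
  push_neg at h
  set W : Submodule ℝ (Fin m → ℝ) := ⨅ i, LinearMap.ker (A i).mulVecLin with hW
  have hmem : ∀ y, y ∈ W ↔ ∀ i, (A i).mulVec y = 0 := by
    intro y
    simp [hW, Submodule.mem_iInf, LinearMap.mem_ker]
  have hWinv : ∀ i, ∀ y ∈ W, (A i).mulVec y ∈ W := by
    intro i y hy
    rw [(hmem y).mp hy i]
    exact W.zero_mem
  rcases hA W hWinv with h1 | h1
  · exact hx (by simpa [h1, Submodule.mem_bot] using (hmem x).mpr h)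
  · have hall : ∀ i (y : Fin m → ℝ), (A i).mulVec y = 0 := fun i y =>
      (hmem y).mp (h1 ▸ Submodule.mem_top) i
    set v : Fin m → ℝ := Pi.single ⟨0, by omega⟩ 1 with hvdef
    have hv : v ≠ 0 := fun h0 => by
      have := congrFun h0 ⟨0, by omega⟩
      simp [hvdef, Pi.single_apply] at this
    rcases hA (Submodule.span ℝ ({v} : Set (Fin m → ℝ)))
        (fun i y _ => by rw [hall]; exact Submodule.zero_mem _) with h2 | h2
    · have hvmem : v ∈ Submodule.span ℝ ({v} : Set (Fin m → ℝ)) :=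
        Submodule.mem_span_singleton_self v
      rw [h2] at hvmem
      exact hv ((Submodule.mem_bot ℝ).mp hvmem)
    · set u : Fin m → ℝ := Pi.single ⟨1, by omega⟩ 1 with hudef
      have humem : u ∈ Submodule.span ℝ ({v} : Set (Fin m → ℝ)) := h2 ▸ Submodule.mem_top
      rcases Submodule.mem_span_singleton.mp humem with ⟨c, hc⟩
      have h1c := congrFun hc ⟨1, by omega⟩
      simp [hudef, hvdef, Pi.single_apply, Fin.ext_iff] at h1c

end Helpers
section Core

variable {m r : ℕ}

lemma maxA_pos (hm : 2 ≤ m) (A : Fin r → Matrix (Fin m) (Fin m) ℝ)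
    (hA : IsIrreducibleFamily A) {N : (Fin m → ℝ) → ℝ} (hN : IsNorm N)
    {x : Fin m → ℝ} (hx : x ≠ 0) : 0 < maxA A N x := by
  obtain ⟨i, hi⟩ := exists_mulVec_ne_zero hm A hA hx
  exact lt_of_lt_of_le (hN.pos hi) (le_ciSup (maxA_bdd A N x) i)

lemma rho_bounds (hm : 2 ≤ m) (hr : 1 ≤ r) (A : Fin r → Matrix (Fin m) (Fin m) ℝ)
    (hA : IsIrreducibleFamily A) {N : (Fin m → ℝ) → ℝ} (hN : IsNorm N) :
    0 < rhoInf A N ∧ rhoInf A N ≤ rhoSup A N ∧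
      ∀ x, rhoInf A N * N x ≤ maxA A N x ∧ maxA A N x ≤ rhoSup A N * N x := by
  haveI : Nonempty (Fin m) := ⟨⟨0, by omega⟩⟩
  set f : (Fin m → ℝ) → ℝ := fun x => maxA A N x / N x with hf
  have hMsem : IsSeminorm (maxA A N) := maxA_seminorm hr A hN.sem
  have hscale : ∀ (c : ℝ), c ≠ 0 → ∀ x, f (c • x) = f x := by
    intro c hc x
    simp only [hf, hMsem.2.1, hN.sem.2.1]
    exact mul_div_mul_left _ _ (abs_ne_zero.mpr hc)
  have hsne : ∀ y ∈ Metric.sphere (0 : Fin m → ℝ) 1, y ≠ 0 := by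
    intro y hy h0
    rw [mem_sphere_iff_norm, h0] at hy
    simp at hy
  have hSeq : f '' {x | x ≠ 0} = f '' Metric.sphere 0 1 := by
    apply Set.Subset.antisymm
    · rintro _ ⟨x, hx, rfl⟩
      have hxn : ‖x‖ ≠ 0 := norm_ne_zero_iff.mpr hx
      refine ⟨‖x‖⁻¹ • x, ?_, hscale _ (inv_ne_zero hxn) x⟩
      rw [mem_sphere_iff_norm, sub_zero, norm_smul, norm_inv, norm_norm,
        inv_mul_cancel₀ hxn]
    · rintro _ ⟨x, hx, rfl⟩
      exact ⟨x, hsne x hx, rfl⟩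
  have hcont : ContinuousOn f (Metric.sphere 0 1) :=
    ContinuousOn.div hMsem.cont.continuousOn hN.sem.cont.continuousOn
      fun x hx => ne_of_gt (hN.pos (hsne x hx))
  have hK : IsCompact (f '' Metric.sphere 0 1) :=
    (isCompact_sphere 0 1).image_of_continuousOn hcont
  have hne : (f '' Metric.sphere 0 1).Nonempty :=
    (NormedSpace.sphere_nonempty.mpr zero_le_one).image f
  have eInf : rhoInf A N = sInf (f '' Metric.sphere 0 1) := congrArg sInf hSeq
  have eSup : rhoSup A N = sSup (f '' Metric.sphere 0 1) := congrArg sSup hSeq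
  have hmemratio : ∀ x : Fin m → ℝ, x ≠ 0 →
      rhoInf A N ≤ f x ∧ f x ≤ rhoSup A N := by
    intro x hx
    have hmem : f x ∈ f '' Metric.sphere 0 1 := hSeq ▸ ⟨x, hx, rfl⟩
    exact ⟨eInf ▸ csInf_le hK.bddBelow hmem, eSup ▸ le_csSup hK.bddAbove hmem⟩
  have hpos : 0 < rhoInf A N := by
    rw [eInf]
    obtain ⟨x0, hx0, hfx0⟩ := hK.sInf_mem hne
    rw [← hfx0]
    exact div_pos (maxA_pos hm A hA hN (hsne x0 hx0)) (hN.pos (hsne x0 hx0))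
  refine ⟨hpos, ?_, ?_⟩
  · rw [eInf, eSup]
    exact csInf_le_csSup hne hK.bddBelow hK.bddAbove
  · intro x
    by_cases hx : x = 0
    · simp [hx, hN.sem.zero', hMsem.zero', le_refl]
    · obtain ⟨h1, h2⟩ := hmemratio x hx
      have hNx : 0 < N x := hN.pos hx
      exact ⟨(le_div_iff₀ hNx).mp h1, (div_le_iff₀ hNx).mp h2⟩

lemma gamma_bounds {γ : ℝ → ℝ → ℝ} (hγ : IsAveraging γ) {a b : ℝ}
    (ha : 0 < a) (hab : a ≤ b) : a ≤ γ a b ∧ γ a b ≤ b := by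
  rcases eq_or_lt_of_le hab with rfl | h
  · rw [hγ.2.1 a ha]; exact ⟨le_refl a, le_refl a⟩
  · obtain ⟨h1, h2⟩ := hγ.2.2 a b ha (ha.trans h) (ne_of_lt h)
    rw [min_eq_left hab] at h1
    rw [max_eq_right hab] at h2
    exact ⟨h1.le, h2.le⟩

lemma isNorm_max {N M : (Fin m → ℝ) → ℝ} (hN : IsNorm N) (hM : IsSeminorm M)
    {c : ℝ} (hc : 0 ≤ c) : IsNorm (fun x => max (N x) (c * M x)) := by
  refine ⟨fun x => le_trans (hN.1 x) (le_max_left _ _), fun x hx => ?_,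
    fun t x => ?_, fun x y => ?_⟩
  · exact hN.2.1 x (le_antisymm (hx ▸ le_max_left _ _) (hN.1 x))
  · simp only [hN.2.2.1, hM.2.1]
    rw [mul_max_of_nonneg _ _ (abs_nonneg t)]
    ring_nf
  · refine max_le (le_trans (hN.2.2.2 x y)
      (add_le_add (le_max_left _ _) (le_max_left _ _))) ?_
    calc c * M (x + y) ≤ c * (M x + M y) :=
          mul_le_mul_of_nonneg_left (hM.2.2 x y) hc
      _ = c * M x + c * M y := by ring
      _ ≤ _ := add_le_add (le_max_right _ _) (le_max_right _ _)

end Core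
section Step

variable {m r : ℕ}

lemma step_lemma (hm : 2 ≤ m) (hr : 1 ≤ r) (A : Fin r → Matrix (Fin m) (Fin m) ℝ)
    (hA : IsIrreducibleFamily A) {γ : ℝ → ℝ → ℝ} (hγ : IsAveraging γ)
    {N : (Fin m → ℝ) → ℝ} (hN : IsNorm N) :
    IsNorm (fun x => max (N x) ((γ (rhoInf A N) (rhoSup A N))⁻¹ * maxA A N x)) ∧
      rhoInf A N ≤
        rhoInf A (fun x => max (N x) ((γ (rhoInf A N) (rhoSup A N))⁻¹ * maxA A N x)) ∧
      rhoSup A (fun x => max (N x) ((γ (rhoInf A N) (rhoSup A N))⁻¹ * maxA A N x)) ≤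
        rhoSup A N := by
  haveI : Nonempty (Fin r) := ⟨⟨0, hr⟩⟩
  obtain ⟨hρ0, hρle, hpt⟩ := rho_bounds hm hr A hA hN
  obtain ⟨hg1, hg2⟩ := gamma_bounds hγ hρ0 hρle
  have hγpos : 0 < γ (rhoInf A N) (rhoSup A N) := lt_of_lt_of_le hρ0 hg1
  set G := γ (rhoInf A N) (rhoSup A N) with hG
  set g := G⁻¹ with hg
  have hgp : 0 < g := inv_pos.mpr hγpos
  have hMsem : IsSeminorm (maxA A N) := maxA_seminorm hr A hN.sem
  set N' : (Fin m → ℝ) → ℝ := fun x => max (N x) (g * maxA A N x) with hN'def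
  have hN' : IsNorm N' := isNorm_max hN hMsem hgp.le
  have hσpos : 0 < rhoSup A N := lt_of_lt_of_le hρ0 hρle
  -- maxA A N x ≤ G * N' x
  have hMx : ∀ x, maxA A N x ≤ G * N' x := by
    intro x
    have h1 : g * maxA A N x ≤ N' x := le_max_right _ _
    calc maxA A N x = G * (g * maxA A N x) := by
          rw [hg, mul_inv_cancel_left₀ hγpos.ne']
      _ ≤ G * N' x := mul_le_mul_of_nonneg_left h1 hγpos.le
  -- key pointwise bounds for N'
  have key : ∀ x, rhoInf A N * N' x ≤ maxA A N' x ∧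
      maxA A N' x ≤ rhoSup A N * N' x := by
    intro x
    have hNx' : (0:ℝ) ≤ N' x := hN'.1 x
    constructor
    · -- lower bound
      have l1 : maxA A N x ≤ maxA A N' x := by
        refine ciSup_mono (maxA_bdd A N' x) fun i => ?_
        exact le_max_left _ _
      have l2 : rhoInf A N * (g * maxA A N x) ≤ maxA A N' x := by
        have e1 : rhoInf A N * (g * maxA A N x) =
            ⨆ i, rhoInf A N * g * N ((A i).mulVec x) := by
          rw [maxA, Real.mul_iSup_of_nonneg hgp.le,
            Real.mul_iSup_of_nonneg hρ0.le]
          congr 1; ext i; ring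
        rw [e1]
        refine ciSup_le fun i => ?_
        have t1 : rhoInf A N * N ((A i).mulVec x) ≤ maxA A N ((A i).mulVec x) :=
          (hpt _).1
        have t2 : g * maxA A N ((A i).mulVec x) ≤ N' ((A i).mulVec x) :=
          le_max_right _ _
        calc rhoInf A N * g * N ((A i).mulVec x)
            = g * (rhoInf A N * N ((A i).mulVec x)) := by ring
          _ ≤ g * maxA A N ((A i).mulVec x) :=
              mul_le_mul_of_nonneg_left t1 hgp.le
          _ ≤ N' ((A i).mulVec x) := t2
          _ ≤ maxA A N' x := le_ciSup (maxA_bdd A N' x) i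
      have : rhoInf A N * N' x =
          max (rhoInf A N * N x) (rhoInf A N * (g * maxA A N x)) :=
        mul_max_of_nonneg _ _ hρ0.le
      rw [this]
      exact max_le (le_trans (hpt x).1 l1) l2
    · -- upper bound
      refine ciSup_le fun i => ?_
      have u1 : N ((A i).mulVec x) ≤ rhoSup A N * N' x := by
        calc N ((A i).mulVec x) ≤ maxA A N x := le_ciSup (maxA_bdd A N x) i
          _ ≤ G * N' x := hMx x
          _ ≤ rhoSup A N * N' x := mul_le_mul_of_nonneg_right hg2 hNx'
      have u2 : g * maxA A N ((A i).mulVec x) ≤ rhoSup A N * N' x := by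
        have t1 : maxA A N ((A i).mulVec x) ≤ rhoSup A N * N ((A i).mulVec x) :=
          (hpt _).2
        have t2 : N ((A i).mulVec x) ≤ maxA A N x := le_ciSup (maxA_bdd A N x) i
        have t3 : g * maxA A N x ≤ N' x := le_max_right _ _
        calc g * maxA A N ((A i).mulVec x)
            ≤ g * (rhoSup A N * N ((A i).mulVec x)) :=
              mul_le_mul_of_nonneg_left t1 hgp.le
          _ ≤ g * (rhoSup A N * maxA A N x) :=
              mul_le_mul_of_nonneg_left
                (mul_le_mul_of_nonneg_left t2 hσpos.le) hgp.le
          _ = rhoSup A N * (g * maxA A N x) := by ring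
          _ ≤ rhoSup A N * N' x := mul_le_mul_of_nonneg_left t3 hσpos.le
      exact max_le u1 u2
  -- conclude
  obtain ⟨x₀, hx₀⟩ := exists_vec_ne_zero (m := m) hm
  have hne : ((fun x => maxA A N' x / N' x) '' {x | x ≠ 0}).Nonempty :=
    ⟨_, ⟨x₀, hx₀, rfl⟩⟩
  refine ⟨hN', ?_, ?_⟩
  · refine le_csInf hne ?_
    rintro _ ⟨x, hx, rfl⟩
    exact (le_div_iff₀ (hN'.pos hx)).mpr (key x).1
  · refine csSup_le hne ?_
    rintro _ ⟨x, hx, rfl⟩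
    exact (div_le_iff₀ (hN'.pos hx)).mpr (key x).2

end Step
/-- `ρ⁻_n ≤ ρ⁻_{n+1} ≤ ρ⁺_{n+1} ≤ ρ⁺_n` for all `n`; in particular
`ρ⁻_n ≤ ρ⁺_k` for all `n, k` and the limits of `{ρ⁻_n}` and `{ρ⁺_n}` exist. -/
theorem stmt11 {m r : ℕ} (hm : 2 ≤ m) (hr : 1 ≤ r)
    (A : Fin r → Matrix (Fin m) (Fin m) ℝ) (hA : IsIrreducibleFamily A)
    (γ : ℝ → ℝ → ℝ) (hγ : IsAveraging γ)
    (N0 : (Fin m → ℝ) → ℝ) (hN0 : IsNorm N0)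
    (e : Fin m → ℝ) (he : N0 e = 1) :
    (∀ n : ℕ,
        rhoInf A (iterN A γ N0 n) ≤ rhoInf A (iterN A γ N0 (n + 1)) ∧
          rhoInf A (iterN A γ N0 (n + 1)) ≤ rhoSup A (iterN A γ N0 (n + 1)) ∧
            rhoSup A (iterN A γ N0 (n + 1)) ≤ rhoSup A (iterN A γ N0 n)) ∧
      (∀ n k : ℕ, rhoInf A (iterN A γ N0 n) ≤ rhoSup A (iterN A γ N0 k)) ∧
      (∃ l : ℝ, Tendsto (fun n => rhoInf A (iterN A γ N0 n)) atTop (𝓝 l)) ∧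
      (∃ l : ℝ, Tendsto (fun n => rhoSup A (iterN A γ N0 n)) atTop (𝓝 l)) := by
  have hnorm : ∀ n, IsNorm (iterN A γ N0 n) := by
    intro n
    induction n with
    | zero => exact hN0
    | succ n ih => exact (step_lemma hm hr A hA hγ ih).1
  set ρi : ℕ → ℝ := fun n => rhoInf A (iterN A γ N0 n) with hρi
  set ρs : ℕ → ℝ := fun n => rhoSup A (iterN A γ N0 n) with hρs
  have hstep : ∀ n, ρi n ≤ ρi (n + 1) ∧ ρs (n + 1) ≤ ρs n := fun n =>
    ⟨(step_lemma hm hr A hA hγ (hnorm n)).2.1,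
      (step_lemma hm hr A hA hγ (hnorm n)).2.2⟩
  have hle : ∀ n, ρi n ≤ ρs n := fun n =>
    (rho_bounds hm hr A hA (hnorm n)).2.1
  have hmonoI : Monotone ρi := monotone_nat_of_le_succ fun n => (hstep n).1
  have hantiS : Antitone ρs := antitone_nat_of_succ_le fun n => (hstep n).2
  have hcross : ∀ n k, ρi n ≤ ρs k := by
    intro n k
    calc ρi n ≤ ρi (max n k) := hmonoI (le_max_left n k)
      _ ≤ ρs (max n k) := hle _
      _ ≤ ρs k := hantiS (le_max_right n k)
  refine ⟨fun n => ⟨(hstep n).1, hle (n + 1), (hstep n).2⟩, hcross, ?_, ?_⟩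
  · exact ⟨⨆ n, ρi n, tendsto_atTop_ciSup hmonoI
      ⟨ρs 0, by rintro b ⟨n, rfl⟩; exact hcross n 0⟩⟩
  · exact ⟨⨅ n, ρs n, tendsto_atTop_ciInf hantiS
      ⟨ρi 0, by rintro b ⟨n, rfl⟩; exact hcross 0 n⟩⟩
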